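/- For n ≥ 2, replacing the attributes m_1 and m_2 of K^1_n by the single ∃-generalized attribute m_12 with extension m_1' ∪ m_2' increases the number of formal concepts by exactly 2^{n−1} − 1; that is, |𝔅(K^1_{n,ge})| − |𝔅(K^1_n)| = 2^{n−1} − 1. -/
import Mathlib


/-- The intent (attribute derivation) of a set of objects. -/
def intentOf {G M : Type*} (I : G → M → Prop) (A : Set G) : Set M :=
  {m | ∀ g ∈ A, I g m}

/-- The extent (object derivation) of a set of attributes. -/
def extentOf {G M : Type*} (I : G → M → Prop) (B : Set M) : Set G :=
  {g | ∀ m ∈ B, I g m}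

/-- The formal concepts of a context: pairs `(A, B)` with `A' = B` and `B' = A`. -/
def Concepts {G M : Type*} (I : G → M → Prop) : Set (Set G × Set M) :=
  {p | intentOf I p.1 = p.2 ∧ extentOf I p.2 = p.1}

/-- The context `K¹_n = (S_n ∪ {g_1}, S_n ∪ {m_1, m_2}, I)`: objects are
`Fin n ⊕ Unit` (with `Sum.inr () = g_1`, and `i : Fin n` coding the element
`i+1` of `S_n = {1,…,n}`); attributes are `Fin n ⊕ Bool` (with
`Sum.inr false = m_1` and `Sum.inr true = m_2`); `m_1' = {1}` and
`m_2' = S_n \ {1}`. -/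
def K1 (n : ℕ) : (Fin n ⊕ Unit) → (Fin n ⊕ Bool) → Prop
  | Sum.inl g, Sum.inl m => g ≠ m
  | Sum.inr _, Sum.inl _ => True
  | Sum.inl g, Sum.inr false => (g : ℕ) = 0
  | Sum.inl g, Sum.inr true => (g : ℕ) ≠ 0
  | Sum.inr _, Sum.inr _ => False

/-- The ∃-generalized context `K¹_{n,ge} = (S_n ∪ {g_1}, S_n ∪ {m_12}, J)`:
the two attributes `m_1, m_2` are replaced by a single attribute
`m_12 = Sum.inr ()` whose extension is `m_1' ∪ m_2' = S_n`; `J` agrees with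
`I` on the attributes in `S_n`. -/
def K1ge (n : ℕ) : (Fin n ⊕ Unit) → (Fin n ⊕ Unit) → Prop
  | Sum.inl g, Sum.inl m => g ≠ m
  | Sum.inr _, Sum.inl _ => True
  | Sum.inl _, Sum.inr _ => True
  | Sum.inr _, Sum.inr _ => False

lemma subset_ei {G M : Type*} (I : G → M → Prop) (A : Set G) :
    A ⊆ extentOf I (intentOf I A) := fun _ hg _ hm => hm _ hg

lemma closed_iff {G M : Type*} (I : G → M → Prop) (A : Set G) :
    extentOf I (intentOf I A) = A ↔ ∀ g, g ∉ A → ∃ m ∈ intentOf I A, ¬ I g m := by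
  constructor
  · intro h g hg
    by_contra hc
    push_neg at hc
    have : g ∈ extentOf I (intentOf I A) := fun m hm => hc m hm
    rw [h] at this; exact hg this
  · intro h
    refine Set.Subset.antisymm ?_ (subset_ei I A)
    intro g hg
    by_contra hgA
    obtain ⟨m, hm, hIm⟩ := h g hgA
    exact hIm (hg m hm)

noncomputable def conceptsEquiv {G M : Type*} (I : G → M → Prop) :
    Concepts I ≃ {A : Set G // extentOf I (intentOf I A) = A} where
  toFun p := ⟨p.1.1, by rw [p.2.1, p.2.2]⟩
  invFun A := ⟨(A.1, intentOf I A.1), ⟨rfl, A.2⟩⟩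
  left_inv := by
    rintro ⟨⟨A, B⟩, h1, h2⟩
    exact Subtype.ext (Prod.ext rfl h1)
  right_inv := by rintro ⟨A, h⟩; rfl

lemma K1ge_closed (n : ℕ) (A : Set (Fin n ⊕ Unit)) :
    extentOf (K1ge n) (intentOf (K1ge n) A) = A := by
  rw [closed_iff]
  rintro (i | ⟨⟩) hg
  · refine ⟨Sum.inl i, ?_, by simp [K1ge]⟩
    rintro (j | ⟨⟩) hA
    · simp only [K1ge]; rintro rfl; exact hg hA
    · trivial
  · refine ⟨Sum.inr (), ?_, by simp [K1ge]⟩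
    rintro (j | ⟨⟩) hA
    · trivial
    · exact absurd hA hg

abbrev Tn (n : ℕ) [NeZero n] := Set (Fin n) ⊕ Set {i : Fin n // i ≠ 0} ⊕ Unit

def Fn (n : ℕ) [NeZero n] : Tn n → Set (Fin n ⊕ Unit)
  | Sum.inl X => Sum.inl '' X ∪ {Sum.inr ()}
  | Sum.inr (Sum.inl Y) => Sum.inl '' (Subtype.val '' Y)
  | Sum.inr (Sum.inr _) => {Sum.inl 0}

lemma fin_eq_zero {n : ℕ} [NeZero n] {j : Fin n} (h : (j : ℕ) = 0) : j = 0 :=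
  Fin.ext (by simp [h])

lemma mem_Fn_inl {n : ℕ} [NeZero n] (X : Set (Fin n)) (i : Fin n) :
    (Sum.inl i : Fin n ⊕ Unit) ∈ Fn n (Sum.inl X) ↔ i ∈ X := by
  simp [Fn]

lemma mem_Fn_inl_g1 {n : ℕ} [NeZero n] (X : Set (Fin n)) :
    (Sum.inr () : Fin n ⊕ Unit) ∈ Fn n (Sum.inl X) := by
  simp [Fn]

lemma mem_Fn_mid {n : ℕ} [NeZero n] (Y : Set {i : Fin n // i ≠ 0}) (g : Fin n ⊕ Unit) :
    g ∈ Fn n (Sum.inr (Sum.inl Y)) ↔ ∃ y ∈ Y, Sum.inl y.1 = g := by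
  simp [Fn]

lemma Fn_closed (n : ℕ) [NeZero n] (t : Tn n) :
    extentOf (K1 n) (intentOf (K1 n) (Fn n t)) = Fn n t := by
  rw [closed_iff]
  match t with
  | Sum.inl X =>
    rintro (i | ⟨⟩) hg
    · refine ⟨Sum.inl i, ?_, by simp [K1]⟩
      rintro (j | ⟨⟩) hA
      · simp only [K1]; rintro rfl
        exact hg hA
      · trivial
    · exact absurd (mem_Fn_inl_g1 X) hg
  | Sum.inr (Sum.inl Y) =>
    have hm2 : (Sum.inr true : Fin n ⊕ Bool) ∈ intentOf (K1 n) (Fn n (Sum.inr (Sum.inl Y))) := by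
      rintro (j | ⟨⟩) hA
      · obtain ⟨y, _, hy⟩ := (mem_Fn_mid Y _).mp hA
        have hj : j = y.1 := (Sum.inl_injective hy).symm
        simp only [K1]
        exact fun h => y.2 (by rw [← hj]; exact fin_eq_zero h)
      · exact absurd ((mem_Fn_mid Y _).mp hA) (by simp)
    rintro (i | ⟨⟩) hg
    · by_cases hi : i = 0
      · subst hi
        exact ⟨Sum.inr true, hm2, by simp [K1]⟩
      · refine ⟨Sum.inl i, ?_, by simp [K1]⟩
        rintro (j | ⟨⟩) hA
        · simp only [K1]; rintro rfl; exact hg hA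
        · exact absurd ((mem_Fn_mid Y _).mp hA) (by simp)
    · exact ⟨Sum.inr true, hm2, by simp [K1]⟩
  | Sum.inr (Sum.inr _) =>
    rintro (i | ⟨⟩) hg
    · have hi : i ≠ 0 := fun h => hg (by simp [Fn, h])
      refine ⟨Sum.inl i, ?_, by simp [K1]⟩
      rintro (j | ⟨⟩) hA
      · simp only [Fn, Set.mem_singleton_iff, Sum.inl.injEq] at hA
        subst hA
        simp only [K1]
        exact fun h => hi h.symm
      · simp [Fn] at hA
    · refine ⟨Sum.inr false, ?_, by simp [K1]⟩
      rintro (j | ⟨⟩) hA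
      · simp only [Fn, Set.mem_singleton_iff, Sum.inl.injEq] at hA
        subst hA
        simp [K1]
      · simp [Fn] at hA

lemma Fn_inj (n : ℕ) [NeZero n] : Function.Injective (Fn n) := by
  have hg1mid : ∀ (Y : Set {i : Fin n // i ≠ 0}), (Sum.inr () : Fin n ⊕ Unit) ∉ Fn n (Sum.inr (Sum.inl Y)) := by
    intro Y h; exact absurd ((mem_Fn_mid Y _).mp h) (by simp)
  have hg1r : (Sum.inr () : Fin n ⊕ Unit) ∉ Fn n (Sum.inr (Sum.inr ())) := by simp [Fn]
  have hzero : ∀ (Y : Set {i : Fin n // i ≠ 0}), (Sum.inl 0 : Fin n ⊕ Unit) ∉ Fn n (Sum.inr (Sum.inl Y)) := by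
    intro Y h
    obtain ⟨y, _, hy⟩ := (mem_Fn_mid Y _).mp h
    exact y.2 (Sum.inl_injective hy)
  have hzeror : (Sum.inl 0 : Fin n ⊕ Unit) ∈ Fn n (Sum.inr (Sum.inr ())) := rfl
  rintro (X | Y | ⟨⟩) (X' | Y' | ⟨⟩) h
  · congr 1
    ext i
    rw [← mem_Fn_inl X i, ← mem_Fn_inl X' i, h]
  · exact absurd (h ▸ mem_Fn_inl_g1 X) (hg1mid Y')
  · exact absurd (h ▸ mem_Fn_inl_g1 X) hg1r
  · exact absurd (h.symm ▸ mem_Fn_inl_g1 X') (hg1mid Y)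
  · exact congrArg (fun Y => Sum.inr (Sum.inl Y))
      ((Set.image_injective.mpr Sum.inl_injective).comp
        (Set.image_injective.mpr Subtype.val_injective) h)
  · exact absurd (h.symm ▸ hzeror) (hzero Y)
  · exact absurd (h ▸ mem_Fn_inl_g1 X') hg1r
  · exact absurd (h ▸ hzeror) (hzero Y')
  · rfl

lemma Fn_surj (n : ℕ) [NeZero n] (A : Set (Fin n ⊕ Unit))
    (hA : extentOf (K1 n) (intentOf (K1 n) A) = A) : ∃ t, Fn n t = A := by
  by_cases hg1 : (Sum.inr () : Fin n ⊕ Unit) ∈ A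
  · refine ⟨Sum.inl {i | Sum.inl i ∈ A}, ?_⟩
    ext g
    rcases g with i | ⟨⟩
    · rw [mem_Fn_inl]; rfl
    · exact iff_of_true (mem_Fn_inl_g1 _) hg1
  · by_cases h0 : (Sum.inl 0 : Fin n ⊕ Unit) ∈ A
    · refine ⟨Sum.inr (Sum.inr ()), ?_⟩
      have key : ∀ j : Fin n, Sum.inl j ∈ A → j = 0 := by
        intro j hj
        by_contra hj0
        obtain ⟨m, hm, hIm⟩ := (closed_iff (K1 n) A).mp hA (Sum.inr ()) hg1
        rcases m with k | b
        · exact hIm trivial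
        · cases b
          · exact hj0 (fin_eq_zero (hm _ hj))
          · exact (hm _ h0) (Fin.val_zero n)
      ext g
      rcases g with i | ⟨⟩
      · simp only [Fn, Set.mem_singleton_iff, Sum.inl.injEq]
        exact ⟨fun h => h ▸ h0, fun h => (key i h).symm ▸ rfl⟩
      · simp [Fn, hg1]
    · refine ⟨Sum.inr (Sum.inl {y | Sum.inl y.1 ∈ A}), ?_⟩
      ext g
      rcases g with i | ⟨⟩
      · rw [mem_Fn_mid]
        constructor
        · rintro ⟨y, hy, hyi⟩
          exact Sum.inl_injective hyi ▸ hy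
        · intro hi
          have hi0 : i ≠ 0 := fun h => h0 (h ▸ hi)
          exact ⟨⟨i, hi0⟩, hi, rfl⟩
      · constructor
        · intro h
          exact absurd ((mem_Fn_mid _ _).mp h) (by simp)
        · intro h
          exact absurd h hg1

/-- For `n ≥ 2`, the ∃-generalization of `m_1` and `m_2` in `K¹_n` increases
the number of formal concepts by exactly `2^(n-1) - 1`. -/
theorem stmt11 (n : ℕ) (hn : 2 ≤ n) :
    (Nat.card (Concepts (K1ge n)) : ℤ) - Nat.card (Concepts (K1 n)) =
      2 ^ (n - 1) - 1 := by
  obtain ⟨m, rfl⟩ : ∃ m, n = m + 2 := ⟨n - 2, by omega⟩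
  have c1 : Nat.card (Concepts (K1ge (m+2))) = 2 ^ (m + 3) := by
    rw [Nat.card_congr (conceptsEquiv (K1ge (m+2))),
      Nat.card_congr (Equiv.subtypeUnivEquiv (K1ge_closed (m+2))),
      Nat.card_eq_fintype_card, Fintype.card_set, Fintype.card_sum,
      Fintype.card_fin, Fintype.card_unit]
  have c2 : Nat.card (Concepts (K1 (m+2))) = 2 ^ (m+2) + (2 ^ (m+1) + 1) := by
    have e : Tn (m+2) ≃ {A : Set (Fin (m+2) ⊕ Unit) // extentOf (K1 (m+2)) (intentOf (K1 (m+2)) A) = A} := by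
      refine Equiv.ofBijective (fun t => ⟨Fn (m+2) t, Fn_closed (m+2) t⟩) ⟨?_, ?_⟩
      · intro a b h
        exact Fn_inj (m+2) (congrArg Subtype.val h)
      · rintro ⟨A, hA⟩
        obtain ⟨t, ht⟩ := Fn_surj (m+2) A hA
        exact ⟨t, Subtype.ext ht⟩
    rw [Nat.card_congr (conceptsEquiv (K1 (m+2))), ← Nat.card_congr e,
      Nat.card_eq_fintype_card, Fintype.card_sum, Fintype.card_sum,
      Fintype.card_set, Fintype.card_set, Fintype.card_fin, Fintype.card_unit]
    congr 2
    have : Fintype.card {i : Fin (m+2) // i ≠ 0} = m + 1 := by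
      simp [Fintype.card_subtype_compl]
    rw [this]
  rw [c1, c2]
  have h1 : m + 2 - 1 = m + 1 := rfl
  rw [h1]
  push_cast [pow_succ]
  ring
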